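/- (Lemma 2.1, existence of the pest free state in the crop field for the drift model.) Let α ∈ (0,1) and k_p, k_c, ε1, ε2, δ1, δ2, q1, q2 > 0 with ε1 > δ1 + q1 and 0 < ξ < (δ1+q1)/(ε1 − α(δ1+q1)). Define x1* = ((δ1+q1)(1+αξ) − ε1 ξ)/(ε1 − (δ1+q1)), y1* = (1 − x1*/k_p)(1 + x1* + αξ), and y2* = q2 y1*/δ2. Then x1* > 0 and the point (x1*, y1*, 0, y2*) is an equilibrium of the drift AF patch model, i.e., all four right-hand sides vanish there. -/

import Mathlib

/-- Lemma 2.1: existence of the pest free state in the crop field for the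
drift AF patch model. -/
theorem drift_pest_free_crop_field_exists
    (α ξ kp kc ε1 ε2 δ1 δ2 q1 q2 : ℝ)
    (hα : 0 < α ∧ α < 1)
    (hkp : 0 < kp) (hkc : 0 < kc)
    (hε1 : 0 < ε1) (hε2 : 0 < ε2)
    (hδ1 : 0 < δ1) (hδ2 : 0 < δ2)
    (hq1 : 0 < q1) (hq2 : 0 < q2)
    (hgrow : ε1 > δ1 + q1)
    (hξpos : 0 < ξ)
    (hξlt : ξ < (δ1 + q1) / (ε1 - α * (δ1 + q1)))
    (x1s y1s y2s : ℝ)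
    (hx1s : x1s = ((δ1 + q1) * (1 + α * ξ) - ε1 * ξ) / (ε1 - (δ1 + q1)))
    (hy1s : y1s = (1 - x1s / kp) * (1 + x1s + α * ξ))
    (hy2s : y2s = q2 * y1s / δ2) :
    0 < x1s ∧
    x1s * (1 - x1s / kp) - x1s * y1s / (1 + x1s + α * ξ) = 0 ∧
    ε1 * ((x1s + ξ) / (1 + x1s + α * ξ)) * y1s - δ1 * y1s - q1 * y1s = 0 ∧
    (0 : ℝ) * (1 - 0 / kc) - 0 * y2s / (1 + 0) = 0 ∧
    ε2 * ((0 : ℝ) / (1 + 0)) * y2s - δ2 * y2s + q2 * y1s = 0 := by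
  obtain ⟨hα0, hα1⟩ := hα
  have hden : 0 < ε1 - (δ1 + q1) := by linarith
  have hden2 : 0 < ε1 - α * (δ1 + q1) := by nlinarith
  have hnum : 0 < (δ1 + q1) * (1 + α * ξ) - ε1 * ξ := by
    have h := (lt_div_iff₀ hden2).mp hξlt
    nlinarith
  have hx1pos : 0 < x1s := by
    rw [hx1s]; exact div_pos hnum hden
  have hD : (0:ℝ) < 1 + x1s + α * ξ := by nlinarith
  have hDne : (1 + x1s + α * ξ) ≠ 0 := ne_of_gt hD
  refine ⟨hx1pos, ?_, ?_, by ring, ?_⟩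
  · rw [hy1s]; field_simp; ring
  · have hkey : ε1 * (x1s + ξ) = (δ1 + q1) * (1 + x1s + α * ξ) := by
      have : x1s * (ε1 - (δ1 + q1)) = (δ1 + q1) * (1 + α * ξ) - ε1 * ξ := by
        rw [hx1s]; field_simp
      nlinarith [this]
    field_simp
    linear_combination y1s * hkey
  · rw [hy2s]; field_simp; ring
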